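/- Let A be a unital simple separable C*-algebra which is approximately divisible, has real rank zero, is stably finite, and has strict comparison of positive elements, and let a ∈ A be positive. Then there exists a sequence p_1, p_2, … of mutually orthogonal projections in the hereditary subalgebra her(a) = closure(aAa) such that the series b = Σ_{i=1}^∞ 2^{−i} p_i converges in norm, and there is a norm-continuous map h : [0,1] → A with h(t) a positive element of her(a) for every t, h(0) = a, h(1) = b, and h(t) Cuntz equivalent to a for every t ∈ [0,1]. -/

import Mathlib

open Filter Topology

section Defs

variable {A : Type*}

/-- Cuntz subequivalence: `a ≾ b` iff there is a sequence `vₙ` with `‖vₙ * b * vₙ* - a‖ → 0`. -/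
def CuntzLE [NonUnitalCStarAlgebra A] (a b : A) : Prop :=
  ∃ v : ℕ → A, Tendsto (fun n => ‖v n * b * star (v n) - a‖) atTop (𝓝 0)

/-- Cuntz equivalence: `a ∼ b` iff `a ≾ b` and `b ≾ a`. -/
def CuntzEquiv [NonUnitalCStarAlgebra A] (a b : A) : Prop :=
  CuntzLE a b ∧ CuntzLE b a

/-- A projection: a self-adjoint idempotent. -/
def IsProjection [Mul A] [Star A] (p : A) : Prop :=
  IsSelfAdjoint p ∧ p * p = p

/-- Murray–von Neumann equivalence of projections. -/
def MvNEquiv [Mul A] [Star A] (p q : A) : Prop :=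
  ∃ v : A, star v * v = p ∧ v * star v = q

/-- The hereditary subalgebra generated by a positive element `a`: the closure of `a A a`. -/
def her [NonUnitalCStarAlgebra A] (a : A) : Set A :=
  closure {x : A | ∃ y : A, x = a * y * a}

/-- A C*-algebra is simple if its only closed two-sided ideals are `⊥` and `⊤`. -/
def IsSimpleCStarAlgebra (A : Type*) [NonUnitalCStarAlgebra A] : Prop :=
  ∀ I : TwoSidedIdeal A, IsClosed (I : Set A) → I = ⊥ ∨ I = ⊤

/-- A unital C*-algebra is approximately divisible if for each `N ≥ 1` there is an
approximately central sequence of unital `*`-homomorphisms `M_N(ℂ) ⊕ M_{N+1}(ℂ) → A`. -/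
def ApproximatelyDivisible (A : Type*) [CStarAlgebra A] : Prop :=
  ∀ N : ℕ, 0 < N →
    ∃ φ : ℕ → (Matrix (Fin N) (Fin N) ℂ × Matrix (Fin (N + 1)) (Fin (N + 1)) ℂ) →⋆ₐ[ℂ] A,
      ∀ x c, Tendsto (fun n => ‖(φ n) x * c - c * (φ n) x‖) atTop (𝓝 (0 : ℝ))

/-- Real rank zero: every self-adjoint element is a norm limit of self-adjoint elements
with finite spectrum. -/
def RealRankZero (A : Type*) [CStarAlgebra A] : Prop :=
  ∀ a : A, IsSelfAdjoint a → ∀ ε : ℝ, 0 < ε →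
    ∃ b : A, IsSelfAdjoint b ∧ (spectrum ℂ b).Finite ∧ ‖a - b‖ < ε

/-- Stable finiteness: every isometry in every matrix algebra over `A` is a unitary. -/
def StablyFinite (A : Type*) [CStarAlgebra A] : Prop :=
  ∀ n : ℕ, ∀ v : Matrix (Fin n) (Fin n) A, star v * v = 1 → v * star v = 1

/-- A tracial state: a unital positive linear functional satisfying the trace identity. -/
def IsTracialState [CStarAlgebra A] (φ : A →ₗ[ℂ] ℂ) : Prop :=
  φ 1 = 1 ∧ (∀ x : A, ∃ r : ℝ, 0 ≤ r ∧ φ (star x * x) = (r : ℂ)) ∧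
    ∀ x y : A, φ (x * y) = φ (y * x)

/-- The dimension function associated to a tracial state:
`d_τ(a) = lim_{n → ∞} τ(a^{1/n})`. -/
noncomputable def dTau [CStarAlgebra A] (φ : A →ₗ[ℂ] ℂ) (a : A) : ℝ :=
  limUnder atTop (fun n : ℕ => (φ (cfc (fun t : ℝ => t ^ ((n : ℝ)⁻¹)) a)).re)

/-- Strict comparison of positive elements with respect to tracial states. -/
def StrictComparison (A : Type*) [CStarAlgebra A] [PartialOrder A] [StarOrderedRing A] : Prop :=
  ∀ a b : A, 0 ≤ a → 0 ≤ b →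
    (∀ φ : A →ₗ[ℂ] ℂ, IsTracialState φ → dTau φ a < dTau φ b) → CuntzLE a b

end Defs

namespace HPaux
set_option linter.unusedSectionVars false

variable {A : Type*} [CStarAlgebra A] [PartialOrder A] [StarOrderedRing A]

/-- real square root via cfc -/
noncomputable def rt (x : A) : A := cfc (fun t : ℝ => Real.sqrt t) x

lemma rt_sa (x : A) : IsSelfAdjoint (rt x) := cfc_predicate _ x

lemma rt_mul_self {x : A} (hx : 0 ≤ x) : rt x * rt x = x := by
  rw [rt, ← cfc_mul _ _ x]
  have h1 : cfc (fun t : ℝ => Real.sqrt t * Real.sqrt t) x = cfc (id : ℝ → ℝ) x := by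
    apply cfc_congr
    intro t ht
    exact Real.mul_self_sqrt (spectrum_nonneg_of_nonneg hx ht)
  rw [h1, cfc_id ℝ x]

/-- membership lemmas for `her` -/
lemma her_base {a : A} (y : A) : a * y * a ∈ her a := subset_closure ⟨y, rfl⟩

lemma her_conj {a x x' : A} (hx : x ∈ her a) (hx' : x' ∈ her a) (y : A) :
    x * y * x' ∈ her a := by
  rw [her, mem_closure_iff_seq_limit] at hx hx' ⊢
  obtain ⟨u, hu, hul⟩ := hx
  obtain ⟨v, hv, hvl⟩ := hx'
  refine ⟨fun k => u k * y * v k, fun k => ?_, ?_⟩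
  · obtain ⟨z, hz⟩ := hu k
    obtain ⟨w, hw⟩ := hv k
    exact ⟨z * (a * y * a) * w, by show u k * y * v k = _; rw [hz, hw]; noncomm_ring⟩
  · exact ((hul.mul tendsto_const_nhds).mul hvl)

lemma her_add {a x y : A} (hx : x ∈ her a) (hy : y ∈ her a) : x + y ∈ her a := by
  rw [her, mem_closure_iff_seq_limit] at hx hy ⊢
  obtain ⟨u, hu, hul⟩ := hx
  obtain ⟨v, hv, hvl⟩ := hy
  refine ⟨fun k => u k + v k, fun k => ?_, hul.add hvl⟩
  obtain ⟨z, hz⟩ := hu k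
  obtain ⟨w, hw⟩ := hv k
  exact ⟨z + w, by show u k + v k = _; rw [hz, hw]; noncomm_ring⟩

lemma her_smul {a x : A} (c : ℝ) (hx : x ∈ her a) : c • x ∈ her a := by
  rw [her, mem_closure_iff_seq_limit] at hx ⊢
  obtain ⟨u, hu, hul⟩ := hx
  refine ⟨fun k => c • u k, fun k => ?_, hul.const_smul c⟩
  obtain ⟨z, hz⟩ := hu k
  exact ⟨c • z, by show c • u k = _; rw [hz, mul_smul_comm, smul_mul_assoc]⟩

lemma her_isClosed (a : A) : IsClosed (her a) := isClosed_closure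

lemma her_zero (a : A) : (0 : A) ∈ her a := subset_closure ⟨0, by simp⟩

lemma norm_shuffle (z : A) : ‖star z * z‖ = ‖z * star z‖ := by
  rw [CStarRing.norm_star_mul_self, CStarRing.norm_self_mul_star]

lemma wfun_cont (k : ℕ) : Continuous (fun t : ℝ => (Real.sqrt (max t (1/(k+1))))⁻¹) := by
  have hpos : ∀ t : ℝ, Real.sqrt (max t (1/(k+1))) ≠ 0 := by
    intro t
    have h1 : (0:ℝ) < 1/(k+1) := by positivity
    have : (0:ℝ) < max t (1/(k+1)) := lt_of_lt_of_le h1 (le_max_right _ _)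
    exact (Real.sqrt_pos.mpr this).ne'
  exact ((Real.continuous_sqrt.comp (continuous_id.max continuous_const)).inv₀ hpos)

lemma idw_cont (k : ℕ) : Continuous (fun t : ℝ => t * (Real.sqrt (max t (1/(k+1))))⁻¹) :=
  continuous_id.mul (wfun_cont k)

lemma rt_approx {x : A} (hx : 0 ≤ x) :
    Tendsto (fun k : ℕ => cfc (fun t : ℝ => t * (Real.sqrt (max t (1/(k+1))))⁻¹) x) atTop
      (𝓝 (rt x)) := by
  have hsa : IsSelfAdjoint x := IsSelfAdjoint.of_nonneg hx
  rw [tendsto_iff_norm_sub_tendsto_zero]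
  have hb : Tendsto (fun k : ℕ => Real.sqrt (1/(k+1))) atTop (𝓝 0) := by
    have h2 := (Real.continuous_sqrt.tendsto 0).comp tendsto_one_div_add_atTop_nhds_zero_nat
    rw [Real.sqrt_zero] at h2
    exact h2
  apply squeeze_zero (fun k => norm_nonneg _) _ hb
  intro k
  have hsub : cfc (fun t : ℝ => t * (Real.sqrt (max t (1/(k+1))))⁻¹) x - rt x
      = cfc (fun t : ℝ => t * (Real.sqrt (max t (1/(k+1))))⁻¹ - Real.sqrt t) x := by
    rw [rt]
    exact (cfc_sub _ _ x ((idw_cont k).continuousOn) (Real.continuous_sqrt.continuousOn)).symm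
  rw [hsub]
  apply norm_cfc_le (by positivity)
  intro t ht
  have ht0 : (0:ℝ) ≤ t := spectrum_nonneg_of_nonneg hx ht
  have hc : (0:ℝ) < 1/(k+1) := by positivity
  rcases le_or_gt (1/(k+1):ℝ) t with h | h
  · rw [max_eq_left h, ← div_eq_mul_inv, Real.div_sqrt, sub_self, norm_zero]
    positivity
  · rw [max_eq_right h.le, ← div_eq_mul_inv, Real.norm_eq_abs, abs_le]
    have hsp : (0:ℝ) < Real.sqrt (1/(k+1)) := Real.sqrt_pos.mpr hc
    have h1 : t / Real.sqrt (1/(k+1)) ≤ Real.sqrt (1/(k+1)) := by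
      rw [div_le_iff₀ hsp, Real.mul_self_sqrt hc.le]
      exact h.le
    have h2 : Real.sqrt t ≤ Real.sqrt (1/(k+1)) := Real.sqrt_le_sqrt h.le
    have h3 : 0 ≤ t / Real.sqrt (1/(k+1)) := by positivity
    have h4 : 0 ≤ Real.sqrt t := Real.sqrt_nonneg t
    constructor <;> linarith

lemma conj_rt_mem_her {x : A} (hx : 0 ≤ x) (m : A) : rt x * m * rt x ∈ her x := by
  have hsa : IsSelfAdjoint x := IsSelfAdjoint.of_nonneg hx
  have key : ∀ k : ℕ, cfc (fun t : ℝ => t * (Real.sqrt (max t (1/(k+1))))⁻¹) x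
      = x * cfc (fun t : ℝ => (Real.sqrt (max t (1/(k+1))))⁻¹) x := by
    intro k
    rw [cfc_mul (fun t : ℝ => t) _ x (continuous_id.continuousOn) ((wfun_cont k).continuousOn),
      cfc_id' ℝ x hsa]
  have key2 : ∀ k : ℕ, cfc (fun t : ℝ => t * (Real.sqrt (max t (1/(k+1))))⁻¹) x
      = cfc (fun t : ℝ => (Real.sqrt (max t (1/(k+1))))⁻¹) x * x := by
    intro k
    conv_lhs => rw [show (fun t : ℝ => t * (Real.sqrt (max t (1/(k+1))))⁻¹)
      = fun t : ℝ => (Real.sqrt (max t (1/(k+1))))⁻¹ * t from by funext t; ring]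
    rw [cfc_mul _ (fun t : ℝ => t) x ((wfun_cont k).continuousOn) (continuous_id.continuousOn),
      cfc_id' ℝ x hsa]
  rw [her, mem_closure_iff_seq_limit]
  refine ⟨fun k => cfc (fun t : ℝ => t * (Real.sqrt (max t (1/(k+1))))⁻¹) x * m
      * cfc (fun t : ℝ => t * (Real.sqrt (max t (1/(k+1))))⁻¹) x, fun k => ?_, ?_⟩
  · refine ⟨cfc (fun t : ℝ => (Real.sqrt (max t (1/(k+1))))⁻¹) x * m
      * cfc (fun t : ℝ => (Real.sqrt (max t (1/(k+1))))⁻¹) x, ?_⟩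
    beta_reduce
    nth_rewrite 1 [key k]
    rw [key2 k]
    noncomm_ring
  · exact ((rt_approx hx).mul tendsto_const_nhds).mul (rt_approx hx)

lemma mem_her_self {x : A} (hx : 0 ≤ x) : x ∈ her x := by
  have := conj_rt_mem_her hx 1
  rwa [mul_one, rt_mul_self hx] at this

lemma her_subset {a x : A} (hx : x ∈ her a) : her x ⊆ her a := by
  rw [her]
  apply closure_minimal _ (her_isClosed a)
  rintro z ⟨y, rfl⟩
  exact her_conj hx hx y

noncomputable def hf (n : ℕ) (t : ℝ) : ℝ := (Real.sqrt (max t (1/(n+1))))⁻¹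
noncomputable def gf (n : ℕ) (t : ℝ) : ℝ := t * (max t (1/(n+1)))⁻¹
noncomputable def mf (n : ℕ) (t : ℝ) : ℝ := Real.sqrt (1 - gf n t)

lemma cpos (n : ℕ) : (0:ℝ) < 1/(n+1) := by positivity

lemma maxpos (n : ℕ) (t : ℝ) : (0:ℝ) < max t (1/(n+1)) :=
  lt_of_lt_of_le (cpos n) (le_max_right _ _)

lemma hf_cont (n : ℕ) : Continuous (hf n) := wfun_cont n

lemma gf_cont (n : ℕ) : Continuous (gf n) :=
  continuous_id.mul ((continuous_id.max continuous_const).inv₀ (fun t => (maxpos n t).ne'))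

lemma mf_cont (n : ℕ) : Continuous (mf n) :=
  Real.continuous_sqrt.comp (continuous_const.sub (gf_cont n))

lemma gf_le_one (n : ℕ) (t : ℝ) : gf n t ≤ 1 := by
  rw [gf, ← div_eq_mul_inv, div_le_one (maxpos n t)]
  exact le_max_left _ _

lemma hfid_cont (n : ℕ) : Continuous (fun t => hf n t * t) := (hf_cont n).mul continuous_id

lemma gf_nonneg (n : ℕ) {t : ℝ} (ht : 0 ≤ t) : 0 ≤ gf n t := by
  have := (maxpos n t).le
  rw [gf]
  positivity

lemma mf_sq (n : ℕ) (t : ℝ) : mf n t * mf n t = 1 - gf n t :=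
  Real.mul_self_sqrt (by linarith [gf_le_one n t])

lemma hf_id_hf (n : ℕ) (t : ℝ) : hf n t * t * hf n t = gf n t := by
  rw [hf, gf]
  have h1 : Real.sqrt (max t (1/(n+1))) * Real.sqrt (max t (1/(n+1))) = max t (1/(n+1)) :=
    Real.mul_self_sqrt (maxpos n t).le
  field_simp
  rw [Real.sq_sqrt (maxpos n t).le]; ring

lemma one_sub_gf_mul_le (n : ℕ) {t : ℝ} (ht : 0 ≤ t) : (1 - gf n t) * t ≤ 1/(n+1) := by
  rcases le_or_gt t (1/(n+1)) with h | h
  · nlinarith [gf_nonneg n ht, gf_le_one n t]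
  · have hg : gf n t = 1 := by
      rw [gf, max_eq_left h.le, mul_inv_cancel₀ (by linarith [cpos n])]
    rw [hg]
    nlinarith [cpos n]

lemma mf_nonneg (n : ℕ) (t : ℝ) : 0 ≤ mf n t := Real.sqrt_nonneg _

lemma mf_le_one (n : ℕ) {t : ℝ} (ht : 0 ≤ t) : mf n t ≤ 1 := by
  rw [mf]
  exact Real.sqrt_le_one.mpr (by linarith [gf_nonneg n ht])

lemma mf_id_le (n : ℕ) {t : ℝ} (ht : 0 ≤ t) : mf n t * t ≤ 1/(n+1) := by
  rcases le_or_gt t (1/(n+1)) with h | h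
  · nlinarith [mf_le_one n ht, mf_nonneg n t]
  · have hg : gf n t = 1 := by
      rw [gf, max_eq_left h.le, mul_inv_cancel₀ (by linarith [cpos n])]
    rw [mf, hg]
    nlinarith [cpos n, Real.sqrt_nonneg (0:ℝ), Real.sqrt_zero]

/-- The key engine identity. -/
lemma engine {x y : A} (hx : 0 ≤ x) (hy : 0 ≤ y) (n : ℕ) :
    ‖(rt x * cfc (hf n) y) * y * star (rt x * cfc (hf n) y) - x‖
      = ‖cfc (mf n) y * x * cfc (mf n) y‖ := by
  have hysa : IsSelfAdjoint y := IsSelfAdjoint.of_nonneg hy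
  have hKsa : IsSelfAdjoint (cfc (hf n) y) := cfc_predicate _ y
  have hmsa : IsSelfAdjoint (cfc (mf n) y) := cfc_predicate _ y
  have hstar : star (rt x * cfc (hf n) y) = cfc (hf n) y * rt x := by
    rw [star_mul, hKsa.star_eq, (rt_sa x).star_eq]
  have e1 : cfc (fun t => hf n t * t * hf n t) y = cfc (hf n) y * y * cfc (hf n) y := by
    rw [cfc_mul (fun t => hf n t * t) (hf n) y ((hfid_cont n).continuousOn)
        ((hf_cont n).continuousOn),
      cfc_mul (hf n) (fun t : ℝ => t) y ((hf_cont n).continuousOn) (continuous_id.continuousOn),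
      cfc_id' ℝ y hysa]
  have e2 : cfc (fun t => hf n t * t * hf n t) y = cfc (gf n) y := by
    exact cfc_congr (fun t _ => hf_id_hf n t)
  have e3 : (rt x * cfc (hf n) y) * y * star (rt x * cfc (hf n) y)
      = rt x * cfc (gf n) y * rt x := by
    rw [hstar, ← e2, e1]
    noncomm_ring
  have e4 : x - rt x * cfc (gf n) y * rt x
      = rt x * cfc (fun t => 1 - gf n t) y * rt x := by
    have h5 : cfc (fun t : ℝ => 1 - gf n t) y = 1 - cfc (gf n) y := by
      rw [cfc_sub (fun _ : ℝ => (1:ℝ)) (gf n) y (continuous_const.continuousOn)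
        ((gf_cont n).continuousOn), cfc_const 1 y hysa, map_one]
    rw [h5]
    have : rt x * (1 : A) * rt x = x := by rw [mul_one, rt_mul_self hx]
    rw [mul_sub, sub_mul, this]
  have e5 : cfc (fun t : ℝ => 1 - gf n t) y = cfc (mf n) y * cfc (mf n) y := by
    rw [← cfc_mul _ _ y ((mf_cont n).continuousOn) ((mf_cont n).continuousOn)]
    exact cfc_congr (fun t _ => (mf_sq n t).symm)
  have hz1 : star (cfc (mf n) y * rt x) * (cfc (mf n) y * rt x)
      = rt x * cfc (fun t => 1 - gf n t) y * rt x := by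
    rw [star_mul, hmsa.star_eq, (rt_sa x).star_eq, e5]
    noncomm_ring
  have hz2 : (cfc (mf n) y * rt x) * star (cfc (mf n) y * rt x)
      = cfc (mf n) y * x * cfc (mf n) y := by
    rw [star_mul, hmsa.star_eq, (rt_sa x).star_eq]
    calc (cfc (mf n) y * rt x) * (rt x * cfc (mf n) y)
        = cfc (mf n) y * (rt x * rt x) * cfc (mf n) y := by noncomm_ring
      _ = cfc (mf n) y * x * cfc (mf n) y := by rw [rt_mul_self hx]
  rw [e3, norm_sub_rev, e4, ← hz1, norm_shuffle, hz2]

lemma cfc_conj_id {y : A} (hysa : IsSelfAdjoint y) (f : ℝ → ℝ) (hfc : Continuous f) :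
    cfc (fun t => f t * t * f t) y = cfc f y * y * cfc f y := by
  rw [cfc_mul (fun t => f t * t) f y ((hfc.mul continuous_id).continuousOn) hfc.continuousOn,
    cfc_mul f (fun t : ℝ => t) y hfc.continuousOn continuous_id.continuousOn, cfc_id' ℝ y hysa]

lemma cuntzLE_refl (x : A) : CuntzLE x x :=
  ⟨fun _ => 1, by simp⟩

lemma cuntzLE_trans {x y z : A} (h1 : CuntzLE x y) (h2 : CuntzLE y z) : CuntzLE x z := by
  obtain ⟨v, hv⟩ := h1
  obtain ⟨w, hw⟩ := h2
  have hchoice : ∀ n : ℕ, ∃ m : ℕ,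
      ‖w m * z * star (w m) - y‖ < (1/(n+1)) / (‖v n‖ + 1)^2 := by
    intro n
    have hpos : (0:ℝ) < (1/(n+1)) / (‖v n‖ + 1)^2 := by positivity
    exact ((hw.eventually (gt_mem_nhds hpos)).and (Eventually.of_forall fun _ => trivial)).exists
      |>.imp fun m hm => hm.1
  choose m hm using hchoice
  refine ⟨fun n => v n * w (m n), ?_⟩
  have key : ∀ n : ℕ, ‖(v n * w (m n)) * z * star (v n * w (m n)) - x‖
      ≤ 1/(n+1) + ‖v n * y * star (v n) - x‖ := by
    intro n
    have hdecomp : (v n * w (m n)) * z * star (v n * w (m n)) - x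
        = v n * (w (m n) * z * star (w (m n)) - y) * star (v n) + (v n * y * star (v n) - x) := by
      rw [star_mul]
      noncomm_ring
    rw [hdecomp]
    refine (norm_add_le _ _).trans (add_le_add ?_ le_rfl)
    calc ‖v n * (w (m n) * z * star (w (m n)) - y) * star (v n)‖
        ≤ ‖v n * (w (m n) * z * star (w (m n)) - y)‖ * ‖star (v n)‖ := norm_mul_le _ _
      _ ≤ ‖v n‖ * ‖w (m n) * z * star (w (m n)) - y‖ * ‖star (v n)‖ :=
          mul_le_mul_of_nonneg_right (norm_mul_le _ _) (norm_nonneg _)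
      _ ≤ ‖v n‖ * ((1/(n+1)) / (‖v n‖ + 1)^2) * ‖v n‖ := by
          rw [norm_star]
          have h1 := (hm n).le
          have h2 : (0:ℝ) ≤ ‖v n‖ := norm_nonneg _
          apply mul_le_mul_of_nonneg_right _ h2
          exact mul_le_mul_of_nonneg_left h1 h2
      _ ≤ 1/(n+1) := by
          rw [div_eq_mul_inv]
          have h2 : (0:ℝ) ≤ ‖v n‖ := norm_nonneg _
          have h3 : (0:ℝ) < (‖v n‖ + 1)^2 := by positivity
          have h4 : ‖v n‖ * ‖v n‖ ≤ (‖v n‖ + 1)^2 := by nlinarith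
          have h5 : (0:ℝ) ≤ 1/(n+1) := (cpos n).le
          calc ‖v n‖ * (1/(n+1) * ((‖v n‖ + 1)^2)⁻¹) * ‖v n‖
              = (1/(n+1)) * (‖v n‖ * ‖v n‖ / (‖v n‖ + 1)^2) := by ring
            _ ≤ (1/(n+1)) * 1 := by
                apply mul_le_mul_of_nonneg_left _ h5
                rw [div_le_one h3]
                exact h4
            _ = 1/(n+1) := mul_one _
  have hb : Tendsto (fun n : ℕ => 1/((n:ℝ)+1) + ‖v n * y * star (v n) - x‖) atTop (𝓝 0) := by
    have := tendsto_one_div_add_atTop_nhds_zero_nat.add hv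
    simpa using this
  exact squeeze_zero (fun n => norm_nonneg _) key hb

lemma smul_one_conj (r : ℝ) (x : A) : (r • (1:A)) * x * star (r • (1:A)) = (r * r) • x := by
  rw [star_smul, star_one, smul_mul_assoc, one_mul, mul_smul_comm, mul_one, smul_smul,
    star_trivial]

lemma cuntzLE_smul_right {x : A} (c : ℝ) (hc : 0 < c) : CuntzLE x (c • x) := by
  refine ⟨fun _ => (Real.sqrt c)⁻¹ • 1, ?_⟩
  have : ((Real.sqrt c)⁻¹ • (1:A)) * (c • x) * star ((Real.sqrt c)⁻¹ • (1:A)) = x := by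
    rw [smul_one_conj, smul_smul]
    have h1 : (Real.sqrt c)⁻¹ * (Real.sqrt c)⁻¹ * c = 1 := by
      have h2 : Real.sqrt c * Real.sqrt c = c := Real.mul_self_sqrt hc.le
      have h3 : Real.sqrt c ≠ 0 := (Real.sqrt_pos.mpr hc).ne'
      field_simp
      rw [Real.sq_sqrt hc.le]
    rw [h1, one_smul]
  have h0 : (fun _ : ℕ => ‖((Real.sqrt c)⁻¹ • (1:A)) * (c • x) * star ((Real.sqrt c)⁻¹ • (1:A))
      - x‖) = fun _ => (0:ℝ) := by
    funext n
    rw [this, sub_self, norm_zero]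
  rw [h0]
  exact tendsto_const_nhds

lemma cuntzLE_smul_left {x : A} (c : ℝ) (hc : 0 < c) : CuntzLE (c • x) x := by
  refine ⟨fun _ => (Real.sqrt c) • 1, ?_⟩
  have : ((Real.sqrt c) • (1:A)) * x * star ((Real.sqrt c) • (1:A)) = c • x := by
    rw [smul_one_conj, Real.mul_self_sqrt hc.le]
  have h0 : (fun _ : ℕ => ‖((Real.sqrt c) • (1:A)) * x * star ((Real.sqrt c) • (1:A))
      - c • x‖) = fun _ => (0:ℝ) := by
    funext n
    rw [this, sub_self, norm_zero]
  rw [h0]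
  exact tendsto_const_nhds

lemma cuntzLE_of_le {x y : A} (hx : 0 ≤ x) (hy : 0 ≤ y) (hxy : x ≤ y) : CuntzLE x y := by
  have hysa : IsSelfAdjoint y := IsSelfAdjoint.of_nonneg hy
  refine ⟨fun n => rt x * cfc (hf n) y, ?_⟩
  have hbd : ∀ n : ℕ, ‖(rt x * cfc (hf n) y) * y * star (rt x * cfc (hf n) y) - x‖
      ≤ 1/(n+1) := by
    intro n
    rw [engine hx hy n]
    have hmsa : IsSelfAdjoint (cfc (mf n) y) := cfc_predicate _ y
    have h1 : 0 ≤ cfc (mf n) y * x * cfc (mf n) y := by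
      have := star_left_conjugate_nonneg hx (cfc (mf n) y)
      rwa [hmsa.star_eq] at this
    have h2 : cfc (mf n) y * x * cfc (mf n) y ≤ cfc (mf n) y * y * cfc (mf n) y :=
      hmsa.conjugate_le_conjugate hxy
    refine (CStarAlgebra.norm_le_norm_of_nonneg_of_le h1 h2).trans ?_
    rw [← cfc_conj_id hysa (mf n) (mf_cont n)]
    apply norm_cfc_le (cpos n).le
    intro t ht
    have ht0 : (0:ℝ) ≤ t := spectrum_nonneg_of_nonneg hy ht
    have he : mf n t * t * mf n t = (1 - gf n t) * t := by
      rw [show mf n t * t * mf n t = (mf n t * mf n t) * t from by ring, mf_sq]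
    rw [he, Real.norm_eq_abs, abs_of_nonneg (by nlinarith [gf_le_one n t])]
    exact one_sub_gf_mul_le n ht0
  exact squeeze_zero (fun n => norm_nonneg _) hbd tendsto_one_div_add_atTop_nhds_zero_nat

lemma cuntzLE_of_mem_her {x a : A} (hx : 0 ≤ x) (ha : 0 ≤ a) (hmem : x ∈ her a) :
    CuntzLE x a := by
  have hasa : IsSelfAdjoint a := IsSelfAdjoint.of_nonneg ha
  refine ⟨fun n => rt x * cfc (hf n) a, ?_⟩
  rw [Metric.tendsto_atTop]
  intro ε hε
  -- choose an approximant a * y * a close to x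
  rw [her, Metric.mem_closure_iff] at hmem
  obtain ⟨w, ⟨y', hy'⟩, hwx⟩ := hmem (ε/2) (by positivity)
  -- choose N with (1/(N+1))^2 * ‖y'‖ < ε/2
  obtain ⟨N, hN⟩ := exists_nat_gt ((‖y'‖ + 1) / (ε/2))
  refine ⟨N, fun n hn => ?_⟩
  rw [Real.dist_eq, sub_zero, abs_of_nonneg (norm_nonneg _), engine hx ha n]
  have hmsa : IsSelfAdjoint (cfc (mf n) a) := cfc_predicate _ a
  have hm_norm : ‖cfc (mf n) a‖ ≤ 1 := by
    apply norm_cfc_le zero_le_one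
    intro t ht
    have ht0 : (0:ℝ) ≤ t := spectrum_nonneg_of_nonneg ha ht
    rw [Real.norm_eq_abs, abs_of_nonneg (mf_nonneg n t)]
    exact mf_le_one n ht0
  have hma_norm : ‖cfc (mf n) a * a‖ ≤ 1/(n+1) := by
    have e : cfc (mf n) a * a = cfc (fun t => mf n t * t) a := by
      rw [cfc_mul (mf n) (fun t : ℝ => t) a ((mf_cont n).continuousOn)
        continuous_id.continuousOn, cfc_id' ℝ a hasa]
    rw [e]
    apply norm_cfc_le (cpos n).le
    intro t ht
    have ht0 : (0:ℝ) ≤ t := spectrum_nonneg_of_nonneg ha ht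
    rw [Real.norm_eq_abs, abs_of_nonneg (mul_nonneg (mf_nonneg n t) ht0)]
    exact mf_id_le n ht0
  have ham_norm : ‖a * cfc (mf n) a‖ ≤ 1/(n+1) := by
    have e : a * cfc (mf n) a = star (cfc (mf n) a * a) := by
      rw [star_mul, hmsa.star_eq, hasa.star_eq]
    rw [e, norm_star]
    exact hma_norm
  -- decompose m x m = m (x - w) m + m (a y' a) m
  have hdecomp : cfc (mf n) a * x * cfc (mf n) a
      = cfc (mf n) a * (x - w) * cfc (mf n) a
        + (cfc (mf n) a * a) * y' * (a * cfc (mf n) a) := by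
    rw [hy']
    noncomm_ring
  rw [hdecomp]
  have hxw : ‖x - w‖ < ε/2 := by
    rw [← dist_eq_norm]
    exact hwx
  have t1 : ‖cfc (mf n) a * (x - w) * cfc (mf n) a‖ < ε/2 := by
    calc ‖cfc (mf n) a * (x - w) * cfc (mf n) a‖
        ≤ ‖cfc (mf n) a * (x - w)‖ * ‖cfc (mf n) a‖ := norm_mul_le _ _
      _ ≤ ‖cfc (mf n) a‖ * ‖x - w‖ * ‖cfc (mf n) a‖ :=
          mul_le_mul_of_nonneg_right (norm_mul_le _ _) (norm_nonneg _)
      _ ≤ 1 * ‖x - w‖ * 1 := by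
          apply mul_le_mul (mul_le_mul hm_norm le_rfl (norm_nonneg _) zero_le_one) hm_norm
            (norm_nonneg _) (by positivity)
      _ = ‖x - w‖ := by ring
      _ < ε/2 := hxw
  have t2 : ‖(cfc (mf n) a * a) * y' * (a * cfc (mf n) a)‖ < ε/2 := by
    have hb1 : ‖(cfc (mf n) a * a) * y' * (a * cfc (mf n) a)‖
        ≤ (1/(n+1)) * ‖y'‖ * (1/(n+1)) := by
      calc ‖(cfc (mf n) a * a) * y' * (a * cfc (mf n) a)‖
          ≤ ‖(cfc (mf n) a * a) * y'‖ * ‖a * cfc (mf n) a‖ := norm_mul_le _ _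
        _ ≤ ‖cfc (mf n) a * a‖ * ‖y'‖ * ‖a * cfc (mf n) a‖ :=
            mul_le_mul_of_nonneg_right (norm_mul_le _ _) (norm_nonneg _)
        _ ≤ (1/(n+1)) * ‖y'‖ * (1/(n+1)) := by
            apply mul_le_mul (mul_le_mul hma_norm le_rfl (norm_nonneg _) (cpos n).le)
              ham_norm (norm_nonneg _) (by positivity)
    refine hb1.trans_lt ?_
    have hcn : (1:ℝ)/(n+1) ≤ 1/(N+1) := by
      apply one_div_le_one_div_of_le (by positivity)
      have : (N:ℝ) ≤ n := Nat.cast_le.mpr hn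
      linarith
    have hkey : (1:ℝ)/(N+1) * (‖y'‖+1) < ε/2 := by
      have hN1 : (‖y'‖ + 1) < (ε/2) * N := by
        rw [div_lt_iff₀ (by positivity)] at hN
        linarith
      have hNpos : (0:ℝ) < N + 1 := by positivity
      rw [div_mul_eq_mul_div, div_lt_iff₀ hNpos, one_mul]
      nlinarith
    have hcp : (0:ℝ) < 1/(n+1) := cpos n
    have hc1 : (1:ℝ)/(n+1) ≤ 1 := by
      rw [div_le_one (by positivity)]
      simp
    have hy0 : (0:ℝ) ≤ ‖y'‖ := norm_nonneg _
    have k0 : (1/(n+1)) * ‖y'‖ * (1/(n+1)) ≤ (1/(n+1)) * ‖y'‖ * 1 :=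
      mul_le_mul_of_nonneg_left hc1 (mul_nonneg hcp.le hy0)
    have k1 : (1/(n+1)) * ‖y'‖ * (1/(n+1)) ≤ (1/(n+1)) * (‖y'‖+1) := by nlinarith
    have k2 : (1/(n+1)) * (‖y'‖+1) ≤ (1/(N+1)) * (‖y'‖+1) := by nlinarith
    linarith
  calc ‖cfc (mf n) a * (x - w) * cfc (mf n) a
      + (cfc (mf n) a * a) * y' * (a * cfc (mf n) a)‖
      ≤ ‖cfc (mf n) a * (x - w) * cfc (mf n) a‖
        + ‖(cfc (mf n) a * a) * y' * (a * cfc (mf n) a)‖ := norm_add_le _ _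
    _ < ε/2 + ε/2 := by exact add_lt_add t1 t2
    _ = ε := by ring

lemma norm_proj_le_one {e : A} (he : IsSelfAdjoint e) (hee : e * e = e) : ‖e‖ ≤ 1 := by
  have h1 : ‖e‖ * ‖e‖ = ‖e‖ := by
    rw [← CStarRing.norm_star_mul_self (x := e), he.star_eq, hee]
  nlinarith [norm_nonneg e]

lemma one_nonneg : (0:A) ≤ 1 := by
  simpa using star_mul_self_nonneg (1:A)

lemma algebraMap_mono {r s : ℝ} (h : r ≤ s) : algebraMap ℝ A r ≤ algebraMap ℝ A s := by
  rw [← sub_nonneg, ← map_sub, Algebra.algebraMap_eq_smul_one]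
  exact smul_nonneg (by linarith) one_nonneg

lemma exists_good_projection (hrr0 : RealRankZero A) {x : A} (hx : 0 ≤ x) {δ : ℝ} (hδ : 0 < δ) :
    ∃ p : A, IsProjection p ∧ p ∈ her x ∧ ‖(1 - p) * x * (1 - p)‖ ≤ 3 * δ := by
  have hxsa : IsSelfAdjoint x := .of_nonneg hx
  obtain ⟨c, hcsa, hcfin, hcx⟩ := hrr0 x hxsa δ hδ
  have hxc : ‖x - c‖ ≤ δ := hcx.le
  have hxcsa : IsSelfAdjoint (x - c) := hxsa.sub hcsa
  -- the real spectrum of c is finite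
  have hfinR : (spectrum ℝ c).Finite := by
    have hsub : spectrum ℝ c ⊆ (fun r : ℝ => (r:ℂ)) ⁻¹' (spectrum ℂ c) := by
      intro r hr
      simp only [Set.mem_preimage]
      rw [spectrum.mem_iff] at hr ⊢
      rwa [show algebraMap ℂ A (r:ℂ) = algebraMap ℝ A r from
        (IsScalarTower.algebraMap_apply ℝ ℂ A r).symm]
    exact Set.Finite.subset (hcfin.preimage (fun a _ b _ h => by exact_mod_cast h)) hsub
  -- choose a threshold θ ∈ (δ, 2δ) outside the spectrum
  obtain ⟨θ, hθI, hθn⟩ : ((Set.Ioo δ (2*δ)) \ spectrum ℝ c).Nonempty :=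
    ((Set.Ioo_infinite (by linarith : δ < 2*δ)).diff hfinR).nonempty
  obtain ⟨η, hη, hball⟩ := Metric.isOpen_iff.mp (spectrum.isClosed c).isOpen_compl θ hθn
  have hgap : ∀ t ∈ spectrum ℝ c, η ≤ |t - θ| := by
    intro t ht
    by_contra hcon
    push_neg at hcon
    exact (hball (by rwa [Metric.mem_ball, Real.dist_eq])) ht
  set f : ℝ → ℝ := fun t => min 1 (max 0 ((t - (θ - η))/η)) with hfdef
  have hfc : Continuous f :=
    continuous_const.min (continuous_const.max ((continuous_id.sub continuous_const).div_const η))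
  have hf0 : ∀ t, 0 ≤ f t := fun t => le_min zero_le_one (le_max_left _ _)
  have hf1 : ∀ t, f t ≤ 1 := fun t => min_le_left _ _
  have hf01 : ∀ t ∈ spectrum ℝ c, (f t = 0 ∧ t ≤ θ) ∨ (f t = 1 ∧ θ ≤ t) := by
    intro t ht
    rcases le_abs.mp (hgap t ht) with h | h
    · right
      have h1u : (1:ℝ) ≤ (t - (θ - η))/η := by
        rw [le_div_iff₀ hη, one_mul]
        linarith
      refine ⟨?_, by linarith⟩
      rw [hfdef]
      simp only []
      rw [max_eq_right (le_trans zero_le_one h1u), min_eq_left h1u]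
    · left
      have h1u : (t - (θ - η))/η ≤ 0 := div_nonpos_of_nonpos_of_nonneg (by linarith) hη.le
      refine ⟨?_, by linarith⟩
      rw [hfdef]
      simp only []
      rw [max_eq_left h1u, min_eq_right zero_le_one]
  -- the spectral projection q
  set q : A := cfc f c with hqdef
  have hqsa : IsSelfAdjoint q := cfc_predicate _ c
  have hq2 : q * q = q := by
    rw [hqdef, ← cfc_mul f f c hfc.continuousOn hfc.continuousOn]
    apply cfc_congr
    intro t ht
    rcases hf01 t ht with ⟨h, _⟩ | ⟨h, _⟩ <;> simp [h]
  have hq_nonneg : (0:A) ≤ q := by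
    have := star_mul_self_nonneg q
    rwa [hqsa.star_eq, hq2] at this
  have h1q2 : (1 - q) * (1 - q) = 1 - q := by
    have he : (1 - q) * (1 - q) = 1 - q - q + q * q := by noncomm_ring
    rw [he, hq2]
    abel
  have h1qsa : IsSelfAdjoint (1 - q) := (IsSelfAdjoint.one A).sub hqsa
  have h1q_nonneg : (0:A) ≤ 1 - q := by
    have := star_mul_self_nonneg (1 - q)
    rwa [h1qsa.star_eq, h1q2] at this
  -- lower bound on spectrum of c
  have hlow : ∀ t ∈ spectrum ℝ c, -δ ≤ t := by
    have hnn : (0:A) ≤ c + algebraMap ℝ A δ := by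
      have h2 : x - c ≤ algebraMap ℝ A δ :=
        (hxcsa.le_algebraMap_norm_self).trans (algebraMap_mono hxc)
      calc (0:A) ≤ x := hx
        _ = c + (x - c) := by abel
        _ ≤ c + algebraMap ℝ A δ := add_le_add le_rfl h2
    intro t ht
    have hmem : t + δ ∈ spectrum ℝ (c + algebraMap ℝ A δ) := by
      rw [← spectrum.add_singleton_eq]
      exact Set.add_mem_add ht rfl
    linarith [spectrum_nonneg_of_nonneg hnn hmem]
  -- norm bound for (1-q) c (1-q)
  have hf'c : Continuous (fun t => 1 - f t) := continuous_const.sub hfc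
  have e0 : cfc (fun t => 1 - f t) c = 1 - q := by
    rw [cfc_sub (fun _ : ℝ => (1:ℝ)) f c continuous_const.continuousOn hfc.continuousOn,
      cfc_const 1 c hcsa, map_one]
  have hqc_bound : ‖(1 - q) * c * (1 - q)‖ ≤ 2*δ := by
    rw [← e0, ← cfc_conj_id hcsa _ hf'c]
    apply norm_cfc_le (by positivity)
    intro t ht
    rcases hf01 t ht with ⟨h, hle⟩ | ⟨h, _⟩
    · rw [h]
      have h1 := hlow t ht
      have h2 : θ ≤ 2*δ := (Set.mem_Ioo.mp hθI).2.le
      rw [Real.norm_eq_abs]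
      rw [show (1 - (0:ℝ)) * t * (1 - 0) = t from by ring]
      rw [abs_le]
      constructor <;> linarith
    · rw [h]
      rw [show (1 - (1:ℝ)) * t * (1 - 1) = 0 from by ring]
      rw [norm_zero]
      linarith
  have hxq_bound : ‖(1 - q) * x * (1 - q)‖ ≤ 3*δ := by
    have hdec : (1 - q) * x * (1 - q)
        = (1 - q) * c * (1 - q) + (1 - q) * (x - c) * (1 - q) := by
      noncomm_ring
    rw [hdec]
    refine (norm_add_le _ _).trans ?_
    have h1q_norm : ‖(1:A) - q‖ ≤ 1 := norm_proj_le_one h1qsa h1q2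
    have h2 : ‖(1 - q) * (x - c) * (1 - q)‖ ≤ δ := by
      calc ‖(1 - q) * (x - c) * (1 - q)‖
          ≤ ‖(1 - q) * (x - c)‖ * ‖(1:A) - q‖ := norm_mul_le _ _
        _ ≤ ‖(1:A) - q‖ * ‖x - c‖ * ‖(1:A) - q‖ :=
            mul_le_mul_of_nonneg_right (norm_mul_le _ _) (norm_nonneg _)
        _ ≤ 1 * δ * 1 := by
            apply mul_le_mul (mul_le_mul h1q_norm hxc (norm_nonneg _) zero_le_one) h1q_norm
              (norm_nonneg _) (by positivity)
        _ = δ := by ring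
    linarith
  -- lower bound q x q ≥ γ q
  set γ : ℝ := θ - δ with hγdef
  have hγ : 0 < γ := by rw [hγdef]; linarith [(Set.mem_Ioo.mp hθI).1]
  have hqcq_ge : θ • q ≤ q * c * q := by
    rw [← sub_nonneg]
    have e2 : q * c * q - θ • q = cfc (fun t => f t * t * f t - θ * f t) c := by
      rw [cfc_sub (fun t => f t * t * f t) (fun t => θ * f t) c
        (((hfc.mul continuous_id).mul hfc).continuousOn) ((continuous_const.mul hfc).continuousOn),
        cfc_conj_id hcsa f hfc,
        show (fun t => θ * f t) = (fun t => θ • f t) from rfl, cfc_smul θ f c hfc.continuousOn]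
    rw [e2]
    apply cfc_nonneg
    intro t ht
    rcases hf01 t ht with ⟨h, _⟩ | ⟨h, hge⟩ <;> rw [h] <;> nlinarith
  have hqxcq_ge : (-δ) • q ≤ q * (x - c) * q := by
    have h2 : algebraMap ℝ A (-δ) ≤ x - c := by
      have h3 := hxcsa.neg_algebraMap_norm_le_self
      have h4 : algebraMap ℝ A (-δ) ≤ algebraMap ℝ A (-‖x - c‖) := algebraMap_mono (by linarith)
      simp only [map_neg] at h4 ⊢
      exact h4.trans h3
    have h5 := hqsa.conjugate_le_conjugate h2
    have h6 : q * algebraMap ℝ A (-δ) * q = (-δ) • q := by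
      rw [Algebra.algebraMap_eq_smul_one, mul_smul_comm, mul_one, smul_mul_assoc, hq2]
    rwa [h6] at h5
  have hqxq_ge : γ • q ≤ q * x * q := by
    have h7 : θ • q + (-δ) • q ≤ q * c * q + q * (x - c) * q := add_le_add hqcq_ge hqxcq_ge
    have h8 : q * c * q + q * (x - c) * q = q * x * q := by noncomm_ring
    have h9 : θ • q + (-δ) • q = γ • q := by
      rw [← add_smul, hγdef]
      congr 1
    rwa [h8, h9] at h7
  -- u is invertible
  set γ' : ℝ := min γ 1 with hγ'def
  have hγ' : 0 < γ' := lt_min hγ one_pos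
  obtain ⟨u, hudef⟩ : ∃ u : A, u = q * x * q + (1 - q) := ⟨_, rfl⟩
  have hqxq_sa : IsSelfAdjoint (q * x * q) := by
    rw [IsSelfAdjoint, star_mul, star_mul, hqsa.star_eq, hxsa.star_eq]
    noncomm_ring
  have hu_sa : IsSelfAdjoint u := by
    rw [hudef]
    exact hqxq_sa.add h1qsa
  have hγ'γ : γ' ≤ γ := by rw [hγ'def]; exact min_le_left _ _
  have hγ'1 : γ' ≤ 1 := by rw [hγ'def]; exact min_le_right _ _
  have hu_ge : algebraMap ℝ A γ' ≤ u := by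
    rw [hudef, ← sub_nonneg]
    have he : q * x * q + (1 - q) - algebraMap ℝ A γ'
        = (q * x * q - γ' • q) + ((1 - γ') • (1 - q)) := by
      rw [Algebra.algebraMap_eq_smul_one]
      have h1 : γ' • (1:A) = γ' • q + γ' • (1 - q) := by
        rw [← smul_add]
        congr 1
        abel
      rw [h1, sub_smul, one_smul]
      abel
    rw [he]
    apply add_nonneg
    · rw [sub_nonneg]
      refine le_trans ?_ hqxq_ge
      have h2 : (0:A) ≤ (γ - γ') • q := smul_nonneg (by linarith) hq_nonneg
      have h4 : γ • q - γ' • q = (γ - γ') • q := (sub_smul γ γ' q).symm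
      exact sub_nonneg.mp (by rw [h4]; exact h2)
    · exact smul_nonneg (by linarith) h1q_nonneg
  have hu_unit : IsUnit u := by
    refine CStarAlgebra.isUnit_of_le _ hu_ge ⟨?_, (isUnit_iff_ne_zero.mpr hγ'.ne').map (algebraMap ℝ A)⟩
    rw [Algebra.algebraMap_eq_smul_one]
    exact smul_nonneg hγ'.le one_nonneg
  obtain ⟨iu, hiu_mul, hu_iu⟩ : ∃ iu : A, iu * u = 1 ∧ u * iu = 1 := by
    obtain ⟨U, hU⟩ := hu_unit
    exact ⟨↑U⁻¹, by rw [← hU]; exact U.inv_mul, by rw [← hU]; exact U.mul_inv⟩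
  have hiu_sa : IsSelfAdjoint iu := by
    have h1 : star iu * u = 1 := by
      have := congrArg star hu_iu
      rwa [star_mul, hu_sa.star_eq, star_one] at this
    calc star iu = star iu * (u * iu) := by rw [hu_iu, mul_one]
      _ = (star iu * u) * iu := by noncomm_ring
      _ = iu := by rw [h1, one_mul]
  obtain ⟨s, hsdef⟩ : ∃ s : A, s = q * x * q := ⟨_, rfl⟩
  have hs_sa : IsSelfAdjoint s := hsdef ▸ hqxq_sa
  have hq1q : q * (1 - q) = 0 := by
    rw [mul_sub, mul_one, hq2, sub_self]
  have hqu : q * u = s := by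
    rw [hudef, mul_add, hq1q, add_zero, hsdef, ← mul_assoc, ← mul_assoc, hq2]
  have huq : u * q = s := by
    rw [hudef, add_mul, sub_mul, one_mul, hq2, sub_self, add_zero, hsdef, mul_assoc, hq2]
  have hqiu : q * iu = iu * q := by
    calc q * iu = (iu * u) * (q * iu) := by rw [hiu_mul, one_mul]
      _ = iu * (u * q) * iu := by noncomm_ring
      _ = iu * (q * u) * iu := by rw [huq, hqu]
      _ = (iu * q) * (u * iu) := by noncomm_ring
      _ = iu * q := by rw [hu_iu, mul_one]
  obtain ⟨R, hRdef⟩ : ∃ R : A, R = iu * q := ⟨_, rfl⟩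
  have hRq : R * q = R := by rw [hRdef, mul_assoc, hq2]
  have hqR : q * R = R := by rw [hRdef, ← mul_assoc, hqiu, mul_assoc, hq2]
  have hR_sa : IsSelfAdjoint R := by
    rw [IsSelfAdjoint, hRdef, star_mul, hqsa.star_eq, hiu_sa.star_eq, hqiu]
  have h1qiu : (1 - q) * iu = iu * (1 - q) := by
    rw [sub_mul, mul_sub, one_mul, mul_one, hqiu]
  have hsiu : s * iu = 1 - iu * (1 - q) := by
    have h1 : s = u - (1 - q) := by
      rw [hsdef, hudef]
      abel
    rw [h1, sub_mul, hu_iu, h1qiu]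
  have hsR : s * R = q := by
    calc s * R = (s * iu) * q := by rw [hRdef, ← mul_assoc]
      _ = (1 - iu * (1 - q)) * q := by rw [hsiu]
      _ = q - iu * ((1 - q) * q) := by noncomm_ring
      _ = q := by
          rw [show (1 - q) * q = (0:A) from by rw [sub_mul, one_mul, hq2, sub_self], mul_zero,
            sub_zero]
  have hRs : R * s = q := by
    have := congrArg star hsR
    rwa [star_mul, hR_sa.star_eq, hs_sa.star_eq, hqsa.star_eq] at this
  have hRxq : R * x * q = q := by
    calc R * x * q = (R * q) * x * q := by rw [hRq]
      _ = R * (q * x * q) := by noncomm_ring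
      _ = R * s := by rw [← hsdef]
      _ = q := hRs
  have hRxR : R * x * R = R := by
    calc R * x * R = (R * q) * x * (q * R) := by rw [hRq, hqR]
      _ = (R * (q * x * q)) * R := by noncomm_ring
      _ = (R * s) * R := by rw [← hsdef]
      _ = q * R := by rw [hRs]
      _ = R := hqR
  -- the projection
  obtain ⟨p, hpdef⟩ : ∃ p : A, p = rt x * R * rt x := ⟨_, rfl⟩
  have hp_sa : IsSelfAdjoint p := by
    rw [IsSelfAdjoint, hpdef, star_mul, star_mul, hR_sa.star_eq, (rt_sa x).star_eq]
    noncomm_ring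
  have hp2 : p * p = p := by
    rw [hpdef]
    calc (rt x * R * rt x) * (rt x * R * rt x)
        = rt x * R * (rt x * rt x) * R * rt x := by noncomm_ring
      _ = rt x * (R * x * R) * rt x := by rw [rt_mul_self hx]; noncomm_ring
      _ = rt x * R * rt x := by rw [hRxR]
  refine ⟨p, ⟨hp_sa, hp2⟩, hpdef ▸ conj_rt_mem_her hx R, ?_⟩
  have hpxq : p * (rt x * q) = rt x * q := by
    calc p * (rt x * q) = rt x * R * (rt x * rt x) * q := by rw [hpdef]; noncomm_ring
      _ = rt x * R * x * q := by rw [rt_mul_self hx]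
      _ = rt x * (R * x * q) := by noncomm_ring
      _ = rt x * q := by rw [hRxq]
  obtain ⟨z, hzdef⟩ : ∃ z : A, z = (1 - p) * rt x := ⟨_, rfl⟩
  have hzq : z * q = 0 := by
    rw [hzdef, mul_assoc, sub_mul, one_mul, hpxq, sub_self]
  have hz1q : z = z * (1 - q) := by
    rw [mul_sub, mul_one, hzq, sub_zero]
  have h1p_sa : IsSelfAdjoint (1 - p) := (IsSelfAdjoint.one A).sub hp_sa
  have h1p2 : (1 - p) * (1 - p) = 1 - p := by
    have he : (1 - p) * (1 - p) = 1 - p - p + p * p := by noncomm_ring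
    rw [he, hp2]
    abel
  have hkey1 : (1 - p) * x * (1 - p) = z * star z := by
    rw [hzdef, star_mul, (rt_sa x).star_eq, h1p_sa.star_eq]
    calc (1 - p) * x * (1 - p) = (1 - p) * (rt x * rt x) * (1 - p) := by rw [rt_mul_self hx]
      _ = (1 - p) * rt x * (rt x * (1 - p)) := by noncomm_ring
  have hz_le : ‖z‖ ≤ ‖rt x * (1 - q)‖ := by
    calc ‖z‖ = ‖(1 - p) * (rt x * (1 - q))‖ := by rw [hz1q, hzdef, mul_assoc]
      _ ≤ ‖(1:A) - p‖ * ‖rt x * (1 - q)‖ := norm_mul_le _ _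
      _ ≤ 1 * ‖rt x * (1 - q)‖ :=
          mul_le_mul_of_nonneg_right (norm_proj_le_one h1p_sa h1p2) (norm_nonneg _)
      _ = ‖rt x * (1 - q)‖ := one_mul _
  have hw2 : ‖rt x * (1 - q)‖ * ‖rt x * (1 - q)‖ = ‖(1 - q) * x * (1 - q)‖ := by
    rw [← CStarRing.norm_star_mul_self (x := rt x * (1 - q))]
    congr 1
    rw [star_mul, (rt_sa x).star_eq, h1qsa.star_eq]
    calc (1 - q) * rt x * (rt x * (1 - q)) = (1 - q) * (rt x * rt x) * (1 - q) := by
          noncomm_ring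
      _ = (1 - q) * x * (1 - q) := by rw [rt_mul_self hx]
  calc ‖(1 - p) * x * (1 - p)‖ = ‖z * star z‖ := by rw [hkey1]
    _ = ‖z‖ * ‖z‖ := CStarRing.norm_self_mul_star
    _ ≤ ‖rt x * (1 - q)‖ * ‖rt x * (1 - q)‖ :=
        mul_le_mul hz_le hz_le (norm_nonneg _) (norm_nonneg _)
    _ = ‖(1 - q) * x * (1 - q)‖ := hw2
    _ ≤ 3 * δ := hxq_bound

lemma her_mul2 {a x x' : A} (hx : x ∈ her a) (hx' : x' ∈ her a) : x * x' ∈ her a := by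
  have := her_conj hx hx' 1
  rwa [mul_one] at this

lemma her_neg {a x : A} (hx : x ∈ her a) : -x ∈ her a := by
  have := her_smul (-1 : ℝ) hx
  rwa [neg_one_smul] at this

lemma her_sub {a x y : A} (hx : x ∈ her a) (hy : y ∈ her a) : x - y ∈ her a := by
  rw [sub_eq_add_neg]
  exact her_add hx (her_neg hy)

lemma her_mul_eq_zero {x w : A} (hwx : w * x = 0) (hxw : x * w = 0) :
    ∀ z ∈ her x, w * z = 0 ∧ z * w = 0 := by
  intro z hz
  rw [her, mem_closure_iff_seq_limit] at hz
  obtain ⟨u, hu, hul⟩ := hz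
  constructor
  · have h1 : ∀ k, w * u k = 0 := by
      intro k
      obtain ⟨y, hy⟩ := hu k
      rw [hy, ← mul_assoc, ← mul_assoc, hwx, zero_mul, zero_mul]
    have h2 : Tendsto (fun k => w * u k) atTop (𝓝 (w * z)) := tendsto_const_nhds.mul hul
    rw [show (fun k => w * u k) = fun _ => (0:A) from funext h1] at h2
    exact tendsto_nhds_unique h2 tendsto_const_nhds
  · have h1 : ∀ k, u k * w = 0 := by
      intro k
      obtain ⟨y, hy⟩ := hu k
      rw [hy, mul_assoc, hxw, mul_zero]
    have h2 : Tendsto (fun k => u k * w) atTop (𝓝 (z * w)) := hul.mul tendsto_const_nhds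
    rw [show (fun k => u k * w) = fun _ => (0:A) from funext h1] at h2
    exact tendsto_nhds_unique h2 tendsto_const_nhds

lemma proj_nonneg {p : A} (hp : IsProjection p) : 0 ≤ p := by
  have := star_mul_self_nonneg p
  rwa [hp.1.star_eq, hp.2] at this

variable (hrr0 : RealRankZero A)

open scoped Classical in
noncomputable def pick (x : A) (n : ℕ) : A :=
  if h : 0 ≤ x then
    Classical.choose (exists_good_projection hrr0 h (δ := ((1:ℝ)/2)^n) (by positivity))
  else 0

lemma pick_spec {x : A} (hx : 0 ≤ x) (n : ℕ) :
    IsProjection (pick hrr0 x n) ∧ pick hrr0 x n ∈ her x ∧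
    ‖(1 - pick hrr0 x n) * x * (1 - pick hrr0 x n)‖ ≤ 3 * ((1:ℝ)/2)^n := by
  rw [pick, dif_pos hx]
  exact Classical.choose_spec (exists_good_projection hrr0 hx (δ := ((1:ℝ)/2)^n) (by positivity))

noncomputable def sseq (a : A) : ℕ → A
  | 0 => 0
  | n+1 => sseq a n + pick hrr0 ((1 - sseq a n) * a * (1 - sseq a n)) n

noncomputable def rseq (a : A) (n : ℕ) : A :=
  pick hrr0 ((1 - sseq hrr0 a n) * a * (1 - sseq hrr0 a n)) n

lemma sseq_succ (a : A) (n : ℕ) :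
    sseq hrr0 a (n+1) = sseq hrr0 a n + rseq hrr0 a n := rfl

variable {a : A}

lemma sseq_props (ha : 0 ≤ a) : ∀ n, IsSelfAdjoint (sseq hrr0 a n) ∧
    (sseq hrr0 a n) * (sseq hrr0 a n) = sseq hrr0 a n ∧ sseq hrr0 a n ∈ her a := by
  intro n
  induction n with
  | zero =>
      refine ⟨?_, ?_, ?_⟩
      · show IsSelfAdjoint (0 : A)
        rw [IsSelfAdjoint, star_zero]
      · show (0:A) * 0 = 0
        simp
      · exact her_zero a
  | succ n ih =>
      obtain ⟨hSsa, hS2, hSmem⟩ := ih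
      have h1Ssa : IsSelfAdjoint (1 - sseq hrr0 a n) := (IsSelfAdjoint.one A).sub hSsa
      have hX0 : 0 ≤ (1 - sseq hrr0 a n) * a * (1 - sseq hrr0 a n) := by
        have := star_left_conjugate_nonneg ha (1 - sseq hrr0 a n)
        rwa [h1Ssa.star_eq] at this
      have hspec := pick_spec hrr0 hX0 n
      have hXmem : (1 - sseq hrr0 a n) * a * (1 - sseq hrr0 a n) ∈ her a := by
        have hamem := mem_her_self ha
        have e : (1 - sseq hrr0 a n) * a * (1 - sseq hrr0 a n)
            = a - sseq hrr0 a n * a - a * sseq hrr0 a n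
              + sseq hrr0 a n * a * sseq hrr0 a n := by noncomm_ring
        rw [e]
        exact her_add (her_sub (her_sub hamem (her_mul2 hSmem hamem))
          (her_mul2 hamem hSmem)) (her_conj hSmem hSmem a)
      have hS1S : sseq hrr0 a n * (1 - sseq hrr0 a n) = 0 := by
        rw [mul_sub, mul_one, hS2, sub_self]
      have h1SS : (1 - sseq hrr0 a n) * sseq hrr0 a n = 0 := by
        rw [sub_mul, one_mul, hS2, sub_self]
      have hSX : sseq hrr0 a n * ((1 - sseq hrr0 a n) * a * (1 - sseq hrr0 a n)) = 0 := by
        calc sseq hrr0 a n * ((1 - sseq hrr0 a n) * a * (1 - sseq hrr0 a n))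
            = (sseq hrr0 a n * (1 - sseq hrr0 a n)) * (a * (1 - sseq hrr0 a n)) := by
              noncomm_ring
          _ = 0 := by rw [hS1S, zero_mul]
      have hXS : ((1 - sseq hrr0 a n) * a * (1 - sseq hrr0 a n)) * sseq hrr0 a n = 0 := by
        calc ((1 - sseq hrr0 a n) * a * (1 - sseq hrr0 a n)) * sseq hrr0 a n
            = ((1 - sseq hrr0 a n) * a) * ((1 - sseq hrr0 a n) * sseq hrr0 a n) := by
              noncomm_ring
          _ = 0 := by rw [h1SS, mul_zero]
      have horth : sseq hrr0 a n * rseq hrr0 a n = 0 ∧ rseq hrr0 a n * sseq hrr0 a n = 0 :=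
        her_mul_eq_zero hSX hXS _ hspec.2.1
      have hrsa : IsSelfAdjoint (rseq hrr0 a n) := hspec.1.1
      have hrr : rseq hrr0 a n * rseq hrr0 a n = rseq hrr0 a n := hspec.1.2
      have hrmem : rseq hrr0 a n ∈ her ((1 - sseq hrr0 a n) * a * (1 - sseq hrr0 a n)) :=
        hspec.2.1
      refine ⟨?_, ?_, ?_⟩
      · rw [sseq_succ]
        exact hSsa.add hrsa
      · rw [sseq_succ]
        have e : (sseq hrr0 a n + rseq hrr0 a n) * (sseq hrr0 a n + rseq hrr0 a n)
            = sseq hrr0 a n * sseq hrr0 a n + sseq hrr0 a n * rseq hrr0 a n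
              + rseq hrr0 a n * sseq hrr0 a n + rseq hrr0 a n * rseq hrr0 a n := by
          noncomm_ring
        rw [e, hS2, horth.1, horth.2, hrr, add_zero, add_zero]
      · rw [sseq_succ]
        exact her_add hSmem (her_subset hXmem hrmem)

lemma sr_orth (ha : 0 ≤ a) : ∀ n, sseq hrr0 a n * rseq hrr0 a n = 0 ∧ rseq hrr0 a n * sseq hrr0 a n = 0 := by
  intro n
  obtain ⟨hSsa, hS2, hSmem⟩ := sseq_props hrr0 ha n
  have h1Ssa : IsSelfAdjoint (1 - sseq hrr0 a n) := (IsSelfAdjoint.one A).sub hSsa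
  have hX0 : 0 ≤ (1 - sseq hrr0 a n) * a * (1 - sseq hrr0 a n) := by
    have := star_left_conjugate_nonneg ha (1 - sseq hrr0 a n)
    rwa [h1Ssa.star_eq] at this
  have hspec := pick_spec hrr0 hX0 n
  have hS1S : sseq hrr0 a n * (1 - sseq hrr0 a n) = 0 := by
    rw [mul_sub, mul_one, hS2, sub_self]
  have h1SS : (1 - sseq hrr0 a n) * sseq hrr0 a n = 0 := by
    rw [sub_mul, one_mul, hS2, sub_self]
  have hSX : sseq hrr0 a n * ((1 - sseq hrr0 a n) * a * (1 - sseq hrr0 a n)) = 0 := by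
    calc sseq hrr0 a n * ((1 - sseq hrr0 a n) * a * (1 - sseq hrr0 a n))
        = (sseq hrr0 a n * (1 - sseq hrr0 a n)) * (a * (1 - sseq hrr0 a n)) := by noncomm_ring
      _ = 0 := by rw [hS1S, zero_mul]
  have hXS : ((1 - sseq hrr0 a n) * a * (1 - sseq hrr0 a n)) * sseq hrr0 a n = 0 := by
    calc ((1 - sseq hrr0 a n) * a * (1 - sseq hrr0 a n)) * sseq hrr0 a n
        = ((1 - sseq hrr0 a n) * a) * ((1 - sseq hrr0 a n) * sseq hrr0 a n) := by noncomm_ring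
      _ = 0 := by rw [h1SS, mul_zero]
  exact her_mul_eq_zero hSX hXS _ hspec.2.1

lemma rseq_props (ha : 0 ≤ a) : ∀ n, IsProjection (rseq hrr0 a n) ∧ rseq hrr0 a n ∈ her a ∧
    ‖(1 - rseq hrr0 a n) * ((1 - sseq hrr0 a n) * a * (1 - sseq hrr0 a n))
      * (1 - rseq hrr0 a n)‖ ≤ 3 * ((1:ℝ)/2)^n := by
  intro n
  obtain ⟨hSsa, hS2, hSmem⟩ := sseq_props hrr0 ha n
  have h1Ssa : IsSelfAdjoint (1 - sseq hrr0 a n) := (IsSelfAdjoint.one A).sub hSsa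
  have hX0 : 0 ≤ (1 - sseq hrr0 a n) * a * (1 - sseq hrr0 a n) := by
    have := star_left_conjugate_nonneg ha (1 - sseq hrr0 a n)
    rwa [h1Ssa.star_eq] at this
  have hspec := pick_spec hrr0 hX0 n
  have hXmem : (1 - sseq hrr0 a n) * a * (1 - sseq hrr0 a n) ∈ her a := by
    have hamem := mem_her_self ha
    have e : (1 - sseq hrr0 a n) * a * (1 - sseq hrr0 a n)
        = a - sseq hrr0 a n * a - a * sseq hrr0 a n
          + sseq hrr0 a n * a * sseq hrr0 a n := by noncomm_ring
    rw [e]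
    exact her_add (her_sub (her_sub hamem (her_mul2 hSmem hamem))
      (her_mul2 hamem hSmem)) (her_conj hSmem hSmem a)
  exact ⟨hspec.1, her_subset hXmem hspec.2.1, hspec.2.2⟩

lemma sseq_bound (ha : 0 ≤ a) : ∀ n, ‖(1 - sseq hrr0 a (n+1)) * a * (1 - sseq hrr0 a (n+1))‖
    ≤ 3 * ((1:ℝ)/2)^n := by
  intro n
  obtain ⟨hSsa, hS2, hSmem⟩ := sseq_props hrr0 ha n
  obtain ⟨hSr, hrS⟩ := sr_orth hrr0 ha n
  obtain ⟨hrproj, _, hrbound⟩ := rseq_props hrr0 ha n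
  have e1 : (1:A) - sseq hrr0 a (n+1) = (1 - rseq hrr0 a n) * (1 - sseq hrr0 a n) := by
    rw [sseq_succ]
    have e : (1 - rseq hrr0 a n) * (1 - sseq hrr0 a n)
        = 1 - sseq hrr0 a n - rseq hrr0 a n + rseq hrr0 a n * sseq hrr0 a n := by noncomm_ring
    rw [e, hrS, add_zero]
    abel
  have e2 : (1:A) - sseq hrr0 a (n+1) = (1 - sseq hrr0 a n) * (1 - rseq hrr0 a n) := by
    rw [sseq_succ]
    have e : (1 - sseq hrr0 a n) * (1 - rseq hrr0 a n)
        = 1 - sseq hrr0 a n - rseq hrr0 a n + sseq hrr0 a n * rseq hrr0 a n := by noncomm_ring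
    rw [e, hSr, add_zero]
    abel
  have e3 : (1 - sseq hrr0 a (n+1)) * a * (1 - sseq hrr0 a (n+1))
      = (1 - rseq hrr0 a n) * ((1 - sseq hrr0 a n) * a * (1 - sseq hrr0 a n))
        * (1 - rseq hrr0 a n) := by
    nth_rewrite 1 [e1]
    nth_rewrite 1 [e2]
    noncomm_ring
  rw [e3]
  exact hrbound

lemma rseq_s_eat (ha : 0 ≤ a) : ∀ i n, i < n → rseq hrr0 a i * sseq hrr0 a n = rseq hrr0 a i ∧
    sseq hrr0 a n * rseq hrr0 a i = rseq hrr0 a i := by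
  intro i n h
  induction n with
  | zero => omega
  | succ n ih =>
      rcases Nat.lt_succ_iff_lt_or_eq.mp h with h' | h'
      · have hin := ih h'
        obtain ⟨hSsa, hS2, hSmem⟩ := sseq_props hrr0 ha n
        have h1Ssa : IsSelfAdjoint (1 - sseq hrr0 a n) := (IsSelfAdjoint.one A).sub hSsa
        have hX0 : 0 ≤ (1 - sseq hrr0 a n) * a * (1 - sseq hrr0 a n) := by
          have := star_left_conjugate_nonneg ha (1 - sseq hrr0 a n)
          rwa [h1Ssa.star_eq] at this
        have hspec := pick_spec hrr0 hX0 n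
        have h1 : rseq hrr0 a i * (1 - sseq hrr0 a n) = 0 := by
          rw [mul_sub, mul_one, hin.1, sub_self]
        have h2 : (1 - sseq hrr0 a n) * rseq hrr0 a i = 0 := by
          rw [sub_mul, one_mul, hin.2, sub_self]
        have hX1 : rseq hrr0 a i * ((1 - sseq hrr0 a n) * a * (1 - sseq hrr0 a n)) = 0 := by
          calc rseq hrr0 a i * ((1 - sseq hrr0 a n) * a * (1 - sseq hrr0 a n))
              = (rseq hrr0 a i * (1 - sseq hrr0 a n)) * (a * (1 - sseq hrr0 a n)) := by
                noncomm_ring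
            _ = 0 := by rw [h1, zero_mul]
        have hX2 : ((1 - sseq hrr0 a n) * a * (1 - sseq hrr0 a n)) * rseq hrr0 a i = 0 := by
          calc ((1 - sseq hrr0 a n) * a * (1 - sseq hrr0 a n)) * rseq hrr0 a i
              = ((1 - sseq hrr0 a n) * a) * ((1 - sseq hrr0 a n) * rseq hrr0 a i) := by
                noncomm_ring
            _ = 0 := by rw [h2, mul_zero]
        have horth : rseq hrr0 a i * rseq hrr0 a n = 0 ∧ rseq hrr0 a n * rseq hrr0 a i = 0 :=
          her_mul_eq_zero hX1 hX2 _ hspec.2.1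
        constructor
        · rw [sseq_succ, mul_add, hin.1, horth.1, add_zero]
        · rw [sseq_succ, add_mul, hin.2, horth.2, add_zero]
      · subst h'
        obtain ⟨hSr, hrS⟩ := sr_orth hrr0 ha i
        obtain ⟨hrproj, _, _⟩ := rseq_props hrr0 ha i
        constructor
        · rw [sseq_succ, mul_add, hrS, hrproj.2, zero_add]
        · rw [sseq_succ, add_mul, hSr, hrproj.2, zero_add]

lemma rseq_orth_lt (ha : 0 ≤ a) : ∀ i j, i < j → rseq hrr0 a i * rseq hrr0 a j = 0 ∧
    rseq hrr0 a j * rseq hrr0 a i = 0 := by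
  intro i j h
  have hin := rseq_s_eat hrr0 ha i j h
  obtain ⟨hSsa, hS2, hSmem⟩ := sseq_props hrr0 ha j
  have h1Ssa : IsSelfAdjoint (1 - sseq hrr0 a j) := (IsSelfAdjoint.one A).sub hSsa
  have hX0 : 0 ≤ (1 - sseq hrr0 a j) * a * (1 - sseq hrr0 a j) := by
    have := star_left_conjugate_nonneg ha (1 - sseq hrr0 a j)
    rwa [h1Ssa.star_eq] at this
  have hspec := pick_spec hrr0 hX0 j
  have h1 : rseq hrr0 a i * (1 - sseq hrr0 a j) = 0 := by
    rw [mul_sub, mul_one, hin.1, sub_self]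
  have h2 : (1 - sseq hrr0 a j) * rseq hrr0 a i = 0 := by
    rw [sub_mul, one_mul, hin.2, sub_self]
  have hX1 : rseq hrr0 a i * ((1 - sseq hrr0 a j) * a * (1 - sseq hrr0 a j)) = 0 := by
    calc rseq hrr0 a i * ((1 - sseq hrr0 a j) * a * (1 - sseq hrr0 a j))
        = (rseq hrr0 a i * (1 - sseq hrr0 a j)) * (a * (1 - sseq hrr0 a j)) := by noncomm_ring
      _ = 0 := by rw [h1, zero_mul]
  have hX2 : ((1 - sseq hrr0 a j) * a * (1 - sseq hrr0 a j)) * rseq hrr0 a i = 0 := by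
    calc ((1 - sseq hrr0 a j) * a * (1 - sseq hrr0 a j)) * rseq hrr0 a i
        = ((1 - sseq hrr0 a j) * a) * ((1 - sseq hrr0 a j) * rseq hrr0 a i) := by noncomm_ring
      _ = 0 := by rw [h2, mul_zero]
  exact her_mul_eq_zero hX1 hX2 _ hspec.2.1

lemma sseq_eq_sum (a : A) : ∀ n, sseq hrr0 a n = ∑ i ∈ Finset.range n, rseq hrr0 a i := by
  intro n
  induction n with
  | zero => simp [sseq]
  | succ n ih => rw [sseq_succ, Finset.sum_range_succ, ih]

lemma sum_smul_mul_sum_smul {r : ℕ → A} (horth : ∀ i j, i ≠ j → r i * r j = 0)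
    (hidem : ∀ i, r i * r i = r i) (α β : ℕ → ℝ) {n M : ℕ} (hnM : n ≤ M) :
    (∑ i ∈ Finset.range n, α i • r i) * (∑ j ∈ Finset.range M, β j • r j)
      = ∑ i ∈ Finset.range n, (α i * β i) • r i := by
  rw [Finset.sum_mul_sum]
  apply Finset.sum_congr rfl
  intro i hi
  rw [Finset.sum_eq_single i]
  · rw [smul_mul_assoc, mul_smul_comm, smul_smul, hidem i]
  · intro j _ hne
    rw [smul_mul_assoc, mul_smul_comm, horth i j (fun h => hne h.symm), smul_zero, smul_zero]
  · intro hni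
    exact absurd (Finset.mem_range.mpr (lt_of_lt_of_le (Finset.mem_range.mp hi) hnM)) hni

lemma sum_smul_sa (α : ℕ → ℝ) {r : ℕ → A} (h : ∀ i, IsSelfAdjoint (r i)) (n : ℕ) :
    IsSelfAdjoint (∑ i ∈ Finset.range n, α i • r i) := by
  induction n with
  | zero =>
      rw [Finset.sum_range_zero, IsSelfAdjoint, star_zero]
  | succ n ih =>
      rw [Finset.sum_range_succ]
      refine ih.add ?_
      rw [IsSelfAdjoint, star_smul, star_trivial, (h n).star_eq]

lemma conj_rt_proj_norm {x e : A} (hx : 0 ≤ x) (hesa : IsSelfAdjoint e) (he2 : e * e = e) :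
    ‖rt x * e * rt x - x‖ = ‖(1 - e) * x * (1 - e)‖ := by
  have h1esa : IsSelfAdjoint (1 - e) := (IsSelfAdjoint.one A).sub hesa
  have h1e2 : (1 - e) * (1 - e) = 1 - e := by
    have he' : (1 - e) * (1 - e) = 1 - e - e + e * e := by noncomm_ring
    rw [he', he2]
    abel
  have e1 : rt x * e * rt x - x = -(rt x * (1 - e) * rt x) := by
    have : rt x * (1:A) * rt x = x := by rw [mul_one, rt_mul_self hx]
    rw [mul_sub, sub_mul, this]
    abel
  rw [e1, norm_neg]
  have e2 : rt x * (1 - e) * rt x = star ((1 - e) * rt x) * ((1 - e) * rt x) := by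
    rw [star_mul, (rt_sa x).star_eq, h1esa.star_eq]
    calc rt x * (1 - e) * rt x = rt x * ((1 - e) * (1 - e)) * rt x := by rw [h1e2]
      _ = rt x * (1 - e) * ((1 - e) * rt x) := by noncomm_ring
  have e3 : ((1 - e) * rt x) * star ((1 - e) * rt x) = (1 - e) * x * (1 - e) := by
    rw [star_mul, (rt_sa x).star_eq, h1esa.star_eq]
    calc (1 - e) * rt x * (rt x * (1 - e)) = (1 - e) * (rt x * rt x) * (1 - e) := by noncomm_ring
      _ = (1 - e) * x * (1 - e) := by rw [rt_mul_self hx]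
  rw [e2, norm_shuffle, e3]

include hrr0 in
theorem main_construction {a : A} (ha : 0 ≤ a) :
    ∃ p : ℕ → A,
      (∀ i, IsProjection (p i) ∧ p i ∈ her a) ∧
      (∀ i j, i ≠ j → p i * p j = 0) ∧
      ∃ b : A,
        Tendsto (fun n => ∑ i ∈ Finset.range n, ((1 : ℝ) / 2) ^ (i + 1) • p i) atTop (𝓝 b) ∧
        ∃ h : ℝ → A, ContinuousOn h (Set.Icc 0 1) ∧ h 0 = a ∧ h 1 = b ∧
          ∀ t ∈ Set.Icc (0 : ℝ) 1, h t ∈ her a ∧ 0 ≤ h t ∧ CuntzEquiv (h t) a := by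
  set r : ℕ → A := rseq hrr0 a with hrdef
  set S : ℕ → A := sseq hrr0 a with hSdef
  have hrproj : ∀ i, IsProjection (r i) := fun i => (rseq_props hrr0 ha i).1
  have hrmem : ∀ i, r i ∈ her a := fun i => (rseq_props hrr0 ha i).2.1
  have horth : ∀ i j, i ≠ j → r i * r j = 0 := by
    intro i j hij
    rcases lt_or_gt_of_ne hij with h | h
    · exact (rseq_orth_lt hrr0 ha i j h).1
    · exact (rseq_orth_lt hrr0 ha j i h).2
  have hidem : ∀ i, r i * r i = r i := fun i => (hrproj i).2
  have hrsa : ∀ i, IsSelfAdjoint (r i) := fun i => (hrproj i).1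
  have hrnorm : ∀ i, ‖r i‖ ≤ 1 := fun i => norm_proj_le_one (hrsa i) (hidem i)
  refine ⟨r, fun i => ⟨hrproj i, hrmem i⟩, horth, ?_⟩
  have hsummable : Summable (fun i => ((1 : ℝ) / 2) ^ (i + 1) • r i) := by
    apply Summable.of_norm_bounded (g := fun i => ((1 : ℝ)/2) ^ (i + 1)) ?_ ?_
    · have h1 : Summable (fun i : ℕ => ((1 : ℝ)/2) * (1/2) ^ i) :=
        (summable_geometric_of_lt_one (by norm_num) (by norm_num)).mul_left _
      apply h1.congr
      intro i
      rw [pow_succ]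
      ring
    · intro i
      rw [norm_smul, Real.norm_eq_abs, abs_of_nonneg (by positivity : (0:ℝ) ≤ (1/2)^(i+1))]
      calc ((1:ℝ)/2)^(i+1) * ‖r i‖ ≤ ((1:ℝ)/2)^(i+1) * 1 :=
            mul_le_mul_of_nonneg_left (hrnorm i) (by positivity)
        _ = ((1:ℝ)/2)^(i+1) := mul_one _
  set b : A := ∑' i, ((1 : ℝ) / 2) ^ (i + 1) • r i with hbdef
  have hPb : Tendsto (fun n => ∑ i ∈ Finset.range n, ((1 : ℝ) / 2) ^ (i + 1) • r i) atTop
      (𝓝 b) := hsummable.hasSum.tendsto_sum_nat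
  have hdPd : ∀ n, (∑ i ∈ Finset.range n, (Real.sqrt 2) ^ (i + 1) • r i) * b *
      (∑ i ∈ Finset.range n, (Real.sqrt 2) ^ (i + 1) • r i) = S n := by
    intro n
    have key : ∀ M, n ≤ M →
        (∑ i ∈ Finset.range n, (Real.sqrt 2) ^ (i + 1) • r i)
          * (∑ j ∈ Finset.range M, ((1 : ℝ) / 2) ^ (j + 1) • r j)
          * (∑ i ∈ Finset.range n, (Real.sqrt 2) ^ (i + 1) • r i) = S n := by
      intro M hM
      rw [sum_smul_mul_sum_smul horth hidem _ _ hM,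
        sum_smul_mul_sum_smul horth hidem _ _ (le_refl n)]
      have hcoef : ∀ i : ℕ,
          (Real.sqrt 2) ^ (i + 1) * ((1 : ℝ) / 2) ^ (i + 1) * (Real.sqrt 2) ^ (i + 1) = 1 := by
        intro i
        rw [← mul_pow, ← mul_pow,
          show Real.sqrt 2 * ((1:ℝ)/2) * Real.sqrt 2 = (Real.sqrt 2 * Real.sqrt 2) * (1/2) from
            by ring, Real.mul_self_sqrt (by norm_num)]
        norm_num
      calc ∑ i ∈ Finset.range n, ((Real.sqrt 2) ^ (i + 1) * ((1:ℝ)/2) ^ (i + 1)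
            * (Real.sqrt 2) ^ (i + 1)) • r i
          = ∑ i ∈ Finset.range n, r i := by
            apply Finset.sum_congr rfl
            intro i _
            rw [hcoef i, one_smul]
        _ = S n := (sseq_eq_sum hrr0 a n).symm
    have h1 : Tendsto (fun M => (∑ i ∈ Finset.range n, (Real.sqrt 2) ^ (i + 1) • r i)
        * (∑ j ∈ Finset.range M, ((1 : ℝ) / 2) ^ (j + 1) • r j)
        * (∑ i ∈ Finset.range n, (Real.sqrt 2) ^ (i + 1) • r i)) atTop
        (𝓝 ((∑ i ∈ Finset.range n, (Real.sqrt 2) ^ (i + 1) • r i) * b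
          * (∑ i ∈ Finset.range n, (Real.sqrt 2) ^ (i + 1) • r i))) :=
      (tendsto_const_nhds.mul hPb).mul tendsto_const_nhds
    have h2 := Filter.Tendsto.congr' (Filter.eventually_atTop.mpr ⟨n, fun M hM => key M hM⟩) h1
    exact tendsto_nhds_unique h2 tendsto_const_nhds
  have hS_mem : ∀ n, S n ∈ her a := fun n => (sseq_props hrr0 ha n).2.2
  have hSsa : ∀ n, IsSelfAdjoint (S n) := fun n => (sseq_props hrr0 ha n).1
  have hS2 : ∀ n, S n * S n = S n := fun n => (sseq_props hrr0 ha n).2.1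
  have hb_mem : b ∈ her a := by
    apply (her_isClosed a).mem_of_tendsto hPb
    apply Filter.Eventually.of_forall
    intro n
    induction n with
    | zero =>
        rw [Finset.sum_range_zero]
        exact her_zero a
    | succ n ih =>
        rw [Finset.sum_range_succ]
        exact her_add ih (her_smul _ (hrmem n))
  have hb_nonneg : (0:A) ≤ b := by
    apply CStarAlgebra.isClosed_nonneg.mem_of_tendsto hPb
    apply Filter.Eventually.of_forall
    intro n
    show (0:A) ≤ ∑ i ∈ Finset.range n, ((1 : ℝ) / 2) ^ (i + 1) • r i
    induction n with
    | zero =>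
        rw [Finset.sum_range_zero]
    | succ n ih =>
        rw [Finset.sum_range_succ]
        exact add_nonneg ih (smul_nonneg (by positivity) (proj_nonneg (hrproj n)))
  have hd_sa : ∀ n, IsSelfAdjoint (∑ i ∈ Finset.range n, (Real.sqrt 2) ^ (i + 1) • r i) :=
    fun n => sum_smul_sa _ hrsa n
  have haCb : CuntzLE a b := by
    refine ⟨fun n => rt a * (∑ i ∈ Finset.range (n+1), (Real.sqrt 2) ^ (i + 1) • r i), ?_⟩
    have hkey : ∀ n, ‖rt a * (∑ i ∈ Finset.range (n+1), (Real.sqrt 2) ^ (i + 1) • r i) * b *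
        star (rt a * (∑ i ∈ Finset.range (n+1), (Real.sqrt 2) ^ (i + 1) • r i)) - a‖
        ≤ 3 * ((1:ℝ)/2)^n := by
      intro n
      have e1 : star (rt a * (∑ i ∈ Finset.range (n+1), (Real.sqrt 2) ^ (i + 1) • r i))
          = (∑ i ∈ Finset.range (n+1), (Real.sqrt 2) ^ (i + 1) • r i) * rt a := by
        rw [star_mul, (hd_sa (n+1)).star_eq, (rt_sa a).star_eq]
      rw [e1]
      have e2 : rt a * (∑ i ∈ Finset.range (n+1), (Real.sqrt 2) ^ (i + 1) • r i) * b *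
          ((∑ i ∈ Finset.range (n+1), (Real.sqrt 2) ^ (i + 1) • r i) * rt a)
          = rt a * S (n+1) * rt a := by
        rw [← hdPd (n+1)]
        noncomm_ring
      rw [e2, conj_rt_proj_norm ha (hSsa (n+1)) (hS2 (n+1))]
      exact sseq_bound hrr0 ha n
    apply squeeze_zero (fun n => norm_nonneg _) hkey
    have h3 : Tendsto (fun n : ℕ => ((1:ℝ)/2)^n) atTop (𝓝 0) :=
      tendsto_pow_atTop_nhds_zero_of_lt_one (by norm_num) (by norm_num)
    have h4 := h3.const_mul (3:ℝ)
    simpa using h4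
  have hbCa : CuntzLE b a := cuntzLE_of_mem_her hb_nonneg ha hb_mem
  refine ⟨b, hPb, fun t => (1 - t) • a + t • b, ?_, by simp, by simp, ?_⟩
  · apply Continuous.continuousOn
    exact ((continuous_const.sub continuous_id).smul continuous_const).add
      (continuous_id.smul continuous_const)
  · intro t ht
    rw [Set.mem_Icc] at ht
    obtain ⟨ht0, ht1⟩ := ht
    have hht_mem : (1 - t) • a + t • b ∈ her a :=
      her_add (her_smul _ (mem_her_self ha)) (her_smul _ hb_mem)
    have hht_nonneg : (0:A) ≤ (1 - t) • a + t • b :=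
      add_nonneg (smul_nonneg (by linarith) ha) (smul_nonneg ht0 hb_nonneg)
    refine ⟨hht_mem, hht_nonneg, cuntzLE_of_mem_her hht_nonneg ha hht_mem, ?_⟩
    rcases le_or_gt t (1/2) with hc | hc
    · have h1t : 0 < 1 - t := by linarith
      refine cuntzLE_trans (cuntzLE_smul_right (1 - t) h1t) ?_
      apply cuntzLE_of_le (smul_nonneg h1t.le ha) hht_nonneg
      exact le_add_of_nonneg_right (smul_nonneg ht0 hb_nonneg)
    · have htpos : 0 < t := by linarith
      refine cuntzLE_trans haCb (cuntzLE_trans (cuntzLE_smul_right t htpos) ?_)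
      apply cuntzLE_of_le (smul_nonneg htpos.le hb_nonneg) hht_nonneg
      exact le_add_of_nonneg_left (smul_nonneg (by linarith) ha)

end HPaux

/-- Proposition 3.2 of the paper. Under the hypotheses of the main theorem,
every positive `a` is homotopic, through positive elements of `her(a)` of constant Cuntz
class, to an element `b = Σᵢ 2⁻ⁱ pᵢ` for mutually orthogonal projections `pᵢ ∈ her(a)`. -/
theorem homotopy_to_orthogonal_projection_sum {A : Type*} [CStarAlgebra A] [PartialOrder A]
    [StarOrderedRing A] [TopologicalSpace.SeparableSpace A]
    (hsimple : IsSimpleCStarAlgebra A)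
    (hdiv : ApproximatelyDivisible A)
    (hrr0 : RealRankZero A)
    (hsf : StablyFinite A)
    (hsc : StrictComparison A)
    (a : A) (ha : 0 ≤ a) :
    ∃ p : ℕ → A,
      (∀ i, IsProjection (p i) ∧ p i ∈ her a) ∧
      (∀ i j, i ≠ j → p i * p j = 0) ∧
      ∃ b : A,
        Tendsto (fun n => ∑ i ∈ Finset.range n, ((1 : ℝ) / 2) ^ (i + 1) • p i) atTop (𝓝 b) ∧
        ∃ h : ℝ → A, ContinuousOn h (Set.Icc 0 1) ∧ h 0 = a ∧ h 1 = b ∧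
          ∀ t ∈ Set.Icc (0 : ℝ) 1, h t ∈ her a ∧ 0 ≤ h t ∧ CuntzEquiv (h t) a := by
  exact HPaux.main_construction hrr0 (a := a) ha
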